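/- arXiv:1707.04822 — 3 statements merged into one kernel-verified Lean document; each statement's English description precedes it below -/
import Mathlib

section
/- AdaGradBNG convergence (Theorem 1, second inequality). Let F(·,ξ) be convex and differentiable in x for every ξ, and let f(x) = E_ξ[F(x,ξ)]. Run the AdaGrad with Block-Normalized Gradient algorithm for T iterations with i.i.d. samples ξ_1,…,ξ_T, parameters η > 0, δ > 0, and deterministic initial point x_1. Suppose that almost surely every block gradient is nonzero, ‖F_i'(x_t,ξ_t)‖₂ ≤ M_i for all t and i, and ‖x_t − x*‖_∞ ≤ D_∞ for all t, for some fixed point x* ∈ R^d and constants M_i, D_∞ > 0. Then the averaged iterate x̄_T = (1/T)∑_{t=1}^T x_t satisfies E[f(x̄_T) − f(x*)] ≤ E[‖x_1 − x*‖²_{H_1}]/(2ηT) + D_∞²√(Bd)/(2η√T) + ∑_{i=1}^B η M_i² √(d_i)/√T. -/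
open MeasureTheory ProbabilityTheory
open Finset

/-- Euclidean norm of the `i`-th block of a vector in `ℝ^d`, where `ℝ^d` is
partitioned into `B` blocks of sizes `dsz 1, …, dsz B` (coordinates are indexed
by pairs `⟨i, j⟩` with `i` the block index). -/
noncomputable def blockNorm {B : ℕ} {dsz : Fin B → ℕ} (i : Fin B)
    (v : EuclideanSpace ℝ ((i : Fin B) × Fin (dsz i))) : ℝ :=
  Real.sqrt (∑ j : Fin (dsz i), v ⟨i, j⟩ ^ 2)

lemma convex_grad_ineq {E : Type*} [NormedAddCommGroup E] [InnerProductSpace ℝ E] [CompleteSpace E]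
    {φ : E → ℝ} (hc : ConvexOn ℝ Set.univ φ) {y G : E} (hg : HasGradientAt φ G y) (z : E) :
    (inner ℝ G (z - y) : ℝ) ≤ φ z - φ y := by
  set v := z - y with hv
  have hline : HasDerivAt (fun θ : ℝ => y + θ • v) v 0 := by
    simpa using ((hasDerivAt_id (0 : ℝ)).smul_const v).const_add y
  have hψ : HasDerivAt (fun θ : ℝ => φ (y + θ • v)) ((inner ℝ G v : ℝ)) 0 := by
    have h2 := hg.hasFDerivAt
    have h3 : HasFDerivAt φ (InnerProductSpace.toDual ℝ E G) (y + (0:ℝ) • v) := by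
      simpa using h2
    have h4 := h3.comp_hasDerivAt 0 hline
    simp at h4
    exact h4
  have hslope : ∀ θ : ℝ, θ ∈ Set.Ioc (0:ℝ) 1 →
      slope (fun θ : ℝ => φ (y + θ • v)) 0 θ ≤ φ z - φ y := by
    intro θ hθ
    obtain ⟨hθ0, hθ1⟩ := hθ
    have hcomb : φ (y + θ • v) ≤ (1 - θ) * φ y + θ * φ z := by
      have h4' := hc.2 (Set.mem_univ y) (Set.mem_univ z)
        (show (0:ℝ) ≤ 1 - θ by linarith) hθ0.le (by ring)
      have h4 : φ ((1 - θ) • y + θ • z) ≤ (1 - θ) * φ y + θ * φ z := by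
        simpa [smul_eq_mul] using h4'
      have heq : (1 - θ) • y + θ • z = y + θ • v := by
        rw [hv]; module
      rw [heq] at h4
      simpa [smul_eq_mul] using h4
    rw [slope_def_field]
    have : (φ (y + θ • v) - φ (y + (0:ℝ) • v)) / (θ - 0) ≤ φ z - φ y := by
      rw [div_le_iff₀ (by linarith)]
      simp only [zero_smul, add_zero, sub_zero]
      nlinarith
    simpa using this
  have htend := hasDerivAt_iff_tendsto_slope.mp hψ
  have htend' : Filter.Tendsto (slope (fun θ : ℝ => φ (y + θ • v)) 0) (nhdsWithin 0 (Set.Ioi 0))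
      (nhds ((inner ℝ G v : ℝ))) :=
    htend.mono_left (nhdsWithin_mono 0 (fun a ha => ne_of_gt ha))
  refine le_of_tendsto htend' ?_
  filter_upwards [Ioc_mem_nhdsGT_of_mem (by norm_num : (0:ℝ) ∈ Set.Ico (0:ℝ) 1)] with θ hθ
  exact hslope θ hθ

lemma sum_div_sqrt_le (T : ℕ) (δ : ℝ) (hδ : 0 < δ) (b : ℕ → ℝ) (hb : ∀ n, 0 ≤ b n) :
    ∑ n ∈ Finset.range T, b n / (δ + Real.sqrt (∑ r ∈ Finset.range (n+1), b r))
      ≤ 2 * Real.sqrt (∑ n ∈ Finset.range T, b n) := by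
  have key : ∀ n, b n / (δ + Real.sqrt (∑ r ∈ range (n+1), b r)) ≤
      2 * (Real.sqrt (∑ r ∈ range (n+1), b r) - Real.sqrt (∑ r ∈ range n, b r)) := by
    intro n
    have hA : (0:ℝ) ≤ ∑ r ∈ range n, b r := Finset.sum_nonneg fun i _ => hb i
    have hrw : ∑ r ∈ range (n+1), b r = (∑ r ∈ range n, b r) + b n := Finset.sum_range_succ _ _
    set A := ∑ r ∈ range n, b r with hAdef
    rw [hrw]
    set p := Real.sqrt A with hp'
    set q := Real.sqrt (A + b n) with hq'
    have hp2 : p^2 = A := Real.sq_sqrt hA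
    have hq2 : q^2 = A + b n := Real.sq_sqrt (by linarith [hb n])
    have hpq : p ≤ q := Real.sqrt_le_sqrt (by linarith [hb n])
    have hp0 : 0 ≤ p := Real.sqrt_nonneg _
    have hq0 : 0 ≤ q := Real.sqrt_nonneg _
    rw [div_le_iff₀ (by positivity)]
    nlinarith [hb n]
  calc ∑ n ∈ range T, b n / (δ + Real.sqrt (∑ r ∈ range (n+1), b r))
      ≤ ∑ n ∈ range T, 2 * (Real.sqrt (∑ r ∈ range (n+1), b r)
          - Real.sqrt (∑ r ∈ range n, b r)) := Finset.sum_le_sum fun n _ => key n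
    _ = 2 * (Real.sqrt (∑ r ∈ range T, b r) - Real.sqrt (∑ r ∈ range 0, b r)) := by
        rw [← Finset.mul_sum, Finset.sum_range_sub (fun n => Real.sqrt (∑ r ∈ range n, b r))]
    _ ≤ 2 * Real.sqrt (∑ n ∈ range T, b n) := by
        simp [Real.sqrt_nonneg]

lemma sum_sqrt_le_sqrt_card_mul {ι : Type*} (s : Finset ι) (c : ι → ℝ) (hc : ∀ i ∈ s, 0 ≤ c i) :
    ∑ i ∈ s, Real.sqrt (c i) ≤ Real.sqrt (s.card * ∑ i ∈ s, c i) := by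
  have h1 : (∑ i ∈ s, Real.sqrt (c i))^2 ≤ (s.card : ℝ) * ∑ i ∈ s, Real.sqrt (c i)^2 :=
    sq_sum_le_card_mul_sum_sq
  have h2 : ∑ i ∈ s, Real.sqrt (c i)^2 = ∑ i ∈ s, c i :=
    Finset.sum_congr rfl fun i hi => Real.sq_sqrt (hc i hi)
  rw [h2] at h1
  have hs : 0 ≤ ((s.card : ℝ)) * ∑ i ∈ s, c i :=
    mul_nonneg (Nat.cast_nonneg _) (Finset.sum_nonneg hc)
  have hx : 0 ≤ ∑ i ∈ s, Real.sqrt (c i) := Finset.sum_nonneg fun i _ => Real.sqrt_nonneg _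
  exact (Real.le_sqrt hx hs).mpr h1

lemma abel_telescope (a Δ : ℕ → ℝ) (ha0 : ∀ n, 0 ≤ a n) (hmono : ∀ n, a n ≤ a (n+1))
    (hΔ0 : ∀ n, 0 ≤ Δ n) (D2 : ℝ) (hΔ : ∀ n, Δ n ≤ D2) :
    ∀ T, 0 < T → ∑ n ∈ range T, a n * (Δ n - Δ (n+1)) ≤ a 0 * Δ 0 + D2 * (a (T-1) - a 0) := by
  have main : ∀ T, 0 < T → ∑ n ∈ range T, a n * (Δ n - Δ (n+1)) ≤
      a 0 * Δ 0 + D2 * (a (T-1) - a 0) - a (T-1) * Δ T := by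
    intro T
    induction T with
    | zero => intro h; exact absurd h (by norm_num)
    | succ T ih =>
      intro _
      rcases Nat.eq_zero_or_pos T with h0 | hTpos
      · subst h0
        simp only [Finset.sum_range_one, Nat.add_sub_cancel, zero_add]
        nlinarith [ha0 0, hΔ0 1]
      · have hih := ih hTpos
        rw [Finset.sum_range_succ]
        have hmt : a (T-1) ≤ a T := by
          have h := hmono (T-1)
          have he : T - 1 + 1 = T := by omega
          rwa [he] at h
        have h1 : (a T - a (T-1)) * Δ T ≤ (a T - a (T-1)) * D2 :=
          mul_le_mul_of_nonneg_left (hΔ T) (by linarith)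
        simp only [Nat.add_sub_cancel]
        nlinarith
  intro T hT
  have h := main T hT
  have h2 : 0 ≤ a (T-1) * Δ T := mul_nonneg (ha0 _) (hΔ0 _)
  linarith

lemma fin_sum_Iic_eq {T : ℕ} (t : Fin T) (f : Fin T → ℝ) :
    ∑ r ∈ Finset.Iic t, f r
      = ∑ n ∈ Finset.range (t.val + 1), (if h : n < T then f ⟨n, h⟩ else 0) := by
  classical
  have h1 : Finset.Iic t = Finset.filter (fun r : Fin T => r.val ≤ t.val) Finset.univ := by
    ext r
    simp only [Finset.mem_Iic, Finset.mem_filter, Finset.mem_univ, true_and, Fin.le_def]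
  rw [h1, Finset.sum_filter]
  have h2 : ∑ r : Fin T, (if r.val ≤ t.val then f r else 0)
      = ∑ n ∈ Finset.range T, (fun n => if h : n < T then (if n ≤ t.val then f ⟨n, h⟩ else 0) else 0) n := by
    rw [← Fin.sum_univ_eq_sum_range]
    exact Finset.sum_congr rfl fun i _ => by simp [i.isLt]
  rw [h2]
  rw [← Finset.sum_subset (Finset.range_subset_range.mpr (show t.val + 1 ≤ T from t.isLt))]
  · exact Finset.sum_congr rfl fun n hn => by
      have hn' : n ≤ t.val := by simpa [Nat.lt_succ_iff] using Finset.mem_range.mp hn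
      simp [hn']
  · intro n hn hn2
    have : ¬ (n ≤ t.val) := by
      simp only [Finset.mem_range, Nat.lt_succ_iff] at hn2
      omega
    simp [this]

lemma key_indep_integral {Ω : Type*} [mΩ : MeasurableSpace Ω] (μ : Measure Ω)
    [IsProbabilityMeasure μ]
    {𝒳 : Type*} [m𝒳 : MeasurableSpace 𝒳] (ν : Measure 𝒳) [IsProbabilityMeasure ν]
    {K : Type*} [Fintype K]
    (F : EuclideanSpace ℝ K → 𝒳 → ℝ)
    (hFcont : ∀ a, Continuous fun y => F y a)
    (hFmeas : ∀ y, Measurable (F y))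
    (X : Ω → EuclideanSpace ℝ K) (Y : Ω → 𝒳)
    (hX : Measurable X) (hY : Measurable Y)
    (hindep : IndepFun X Y μ)
    (hYlaw : Measure.map Y μ = ν)
    (hint : Integrable (fun ω => F (X ω) (Y ω)) μ) :
    (∫ ω, F (X ω) (Y ω) ∂μ = ∫ ω, (∫ a, F (X ω) a ∂ν) ∂μ)
    ∧ Integrable (fun ω => ∫ a, F (X ω) a ∂ν) μ := by
  have hU : Measurable (Function.uncurry F) :=
    measurable_uncurry_of_continuous_of_measurable hFcont hFmeas
  have hXY : Measurable fun ω => (X ω, Y ω) := hX.prodMk hY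
  have hjoint : Measure.map (fun ω => (X ω, Y ω)) μ = (μ.map X).prod ν := by
    rw [← hYlaw]
    exact (indepFun_iff_map_prod_eq_prod_map_map hX.aemeasurable hY.aemeasurable).mp hindep
  have hPX : IsProbabilityMeasure (μ.map X) := Measure.isProbabilityMeasure_map hX.aemeasurable
  have hint2 : Integrable (Function.uncurry F) ((μ.map X).prod ν) := by
    rw [← hjoint]
    rw [integrable_map_measure hU.aestronglyMeasurable hXY.aemeasurable]
    exact hint
  have hintL : Integrable (fun y => ∫ a, F y a ∂ν) (μ.map X) := hint2.integral_prod_left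
  constructor
  · calc ∫ ω, F (X ω) (Y ω) ∂μ
        = ∫ p, Function.uncurry F p ∂((μ.map X).prod ν) := by
          rw [← hjoint, integral_map hXY.aemeasurable hU.aestronglyMeasurable]
          rfl
      _ = ∫ y, ∫ a, F y a ∂ν ∂(μ.map X) := integral_prod _ hint2
      _ = ∫ ω, ∫ a, F (X ω) a ∂ν ∂μ :=
          integral_map hX.aemeasurable hintL.aestronglyMeasurable
  · exact (integrable_map_measure hintL.aestronglyMeasurable hX.aemeasurable).mp hintL

lemma indep_part {Ω : Type*} [mΩ : MeasurableSpace Ω] (μ : Measure Ω) [IsProbabilityMeasure μ]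
    {𝒳 : Type*} [m𝒳 : MeasurableSpace 𝒳] {T : ℕ}
    (ξ : Fin T → Ω → 𝒳) (hξmeas : ∀ t, Measurable (ξ t))
    (hiid : iIndepFun ξ μ)
    {K : Type*}
    (X : Ω → EuclideanSpace ℝ K) (t : Fin T)
    (hXG : Measurable[⨆ r : Fin T, ⨆ _ : r < t, MeasurableSpace.comap (ξ r) m𝒳] X) :
    IndepFun X (ξ t) μ := by
  have hdisj : Disjoint {r : Fin T | r < t} {t} := by
    simp only [Set.disjoint_left, Set.mem_setOf_eq, Set.mem_singleton_iff]
    intro r hr; exact ne_of_lt hr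
  have hle : ∀ r : Fin T, MeasurableSpace.comap (ξ r) m𝒳 ≤ mΩ := fun r => (hξmeas r).comap_le
  have hindep : Indep (⨆ r ∈ {r : Fin T | r < t}, MeasurableSpace.comap (ξ r) m𝒳)
      (⨆ r ∈ ({t} : Set (Fin T)), MeasurableSpace.comap (ξ r) m𝒳) μ :=
    indep_iSup_of_disjoint hle hiid hdisj
  rw [_root_.iSup_singleton] at hindep
  have hsup_eq : (⨆ r ∈ {r : Fin T | r < t}, MeasurableSpace.comap (ξ r) m𝒳)
      = ⨆ r : Fin T, ⨆ _ : r < t, MeasurableSpace.comap (ξ r) m𝒳 := rfl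
  rw [hsup_eq] at hindep
  exact indep_of_indep_of_le_left hindep hXG.comap_le


lemma pathwise_bound {B : ℕ} {dsz : Fin B → ℕ} {T : ℕ} (hT : 0 < T)
    {η δ Dinf : ℝ} (hη : 0 < η) (hδ : 0 < δ) (hDinf : 0 < Dinf)
    (X : ℕ → EuclideanSpace ℝ ((i : Fin B) × Fin (dsz i)))
    (G : Fin T → EuclideanSpace ℝ ((i : Fin B) × Fin (dsz i)))
    (g sfun : Fin T → ((i : Fin B) × Fin (dsz i)) → ℝ)
    (M : Fin B → ℝ)
    (xstar : EuclideanSpace ℝ ((i : Fin B) × Fin (dsz i)))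
    (hg : ∀ (t : Fin T) (k : (i : Fin B) × Fin (dsz i)),
      g t k = G t k / blockNorm k.1 (G t))
    (hs : ∀ (t : Fin T) (k : (i : Fin B) × Fin (dsz i)),
      sfun t k = Real.sqrt (∑ r ∈ Finset.Iic t, g r k ^ 2))
    (hupd : ∀ (t : Fin T) (k : (i : Fin B) × Fin (dsz i)),
      X (t.val + 1) k = X t.val k - (η * blockNorm k.1 (G t) / (δ + sfun t k)) * g t k)
    (hN : ∀ (t : Fin T) (i : Fin B), blockNorm i (G t) ≠ 0 ∧ blockNorm i (G t) ≤ M i)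
    (hD : ∀ t ≤ T, ∀ k : (i : Fin B) × Fin (dsz i), |X t k - xstar k| ≤ Dinf) :
    ∑ t : Fin T, (inner ℝ (G t) (X t.val - xstar) : ℝ)
      ≤ (1/(2*η)) * (∑ k : (i : Fin B) × Fin (dsz i),
            (δ + sfun ⟨0, hT⟩ k) * (X 0 k - xstar k) ^ 2)
        + Dinf ^ 2 * Real.sqrt ((∑ i : Fin B, (dsz i : ℝ)) * ((T : ℝ) * B)) / (2*η)
        + ∑ i : Fin B, η * M i ^ 2 * Real.sqrt ((dsz i : ℝ) * T) := by
  classical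
  -- basic positivity facts
  have hN0 : ∀ (t : Fin T) (i : Fin B), 0 < blockNorm i (G t) := fun t i =>
    lt_of_le_of_ne (Real.sqrt_nonneg _) (Ne.symm (hN t i).1)
  have hsnn : ∀ (t : Fin T) (k : (i : Fin B) × Fin (dsz i)), 0 ≤ sfun t k := fun t k => by
    rw [hs]; exact Real.sqrt_nonneg _
  have hapos : ∀ (t : Fin T) (k : (i : Fin B) × Fin (dsz i)), 0 < δ + sfun t k := fun t k => by
    have := hsnn t k; linarith
  have hGk : ∀ (t : Fin T) (k : (i : Fin B) × Fin (dsz i)), G t k = blockNorm k.1 (G t) * g t k := by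
    intro t k
    rw [hg t k, mul_comm, div_mul_cancel₀ _ (hN t k.1).1]
  have hNsq : ∀ (t : Fin T) (i : Fin B),
      blockNorm i (G t) ^ 2 = ∑ j : Fin (dsz i), G t ⟨i, j⟩ ^ 2 := fun t i =>
    Real.sq_sqrt (Finset.sum_nonneg fun j _ => sq_nonneg _)
  have hnorm1 : ∀ (t : Fin T) (i : Fin B), ∑ j : Fin (dsz i), g t ⟨i, j⟩ ^ 2 = 1 := by
    intro t i
    have : ∀ j : Fin (dsz i), g t ⟨i, j⟩ ^ 2 = G t ⟨i, j⟩ ^ 2 / blockNorm i (G t) ^ 2 := by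
      intro j; rw [hg t ⟨i, j⟩, div_pow]
    rw [Finset.sum_congr rfl fun j _ => this j, ← Finset.sum_div, ← hNsq t i,
      div_self (pow_ne_zero 2 (hN t i).1)]
  -- step identity
  have hstep : ∀ t : Fin T, (inner ℝ (G t) (X t.val - xstar) : ℝ)
      = (1/(2*η)) * (∑ k : (i : Fin B) × Fin (dsz i), (δ + sfun t k) *
            ((X t.val k - xstar k) ^ 2 - (X (t.val + 1) k - xstar k) ^ 2))
        + (η/2) * (∑ k : (i : Fin B) × Fin (dsz i), blockNorm k.1 (G t) ^ 2 * g t k ^ 2 / (δ + sfun t k)) := by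
    intro t
    rw [PiLp.inner_apply]
    simp only [RCLike.inner_apply, conj_trivial, PiLp.sub_apply]
    rw [Finset.mul_sum, Finset.mul_sum, ← Finset.sum_add_distrib]
    refine Finset.sum_congr rfl fun k _ => ?_
    rw [hGk t k, hupd t k]
    have h1 : (δ + sfun t k) ≠ 0 := ne_of_gt (hapos t k)
    field_simp
    ring
  -- monotonicity of s
  have hsmono : ∀ (k : (i : Fin B) × Fin (dsz i)) (t t' : Fin T), t' ≤ t → sfun t' k ≤ sfun t k := by
    intro k t t' h
    rw [hs, hs]
    exact Real.sqrt_le_sqrt (Finset.sum_le_sum_of_subset_of_nonneg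
      (Finset.Iic_subset_Iic.mpr h) (fun r _ _ => sq_nonneg _))
  have htlast : T - 1 < T := by omega
  -- Term 1 per coordinate
  have hterm1 : ∀ k : (i : Fin B) × Fin (dsz i),
      ∑ t : Fin T, (δ + sfun t k) *
          ((X t.val k - xstar k) ^ 2 - (X (t.val + 1) k - xstar k) ^ 2)
        ≤ (δ + sfun ⟨0, hT⟩ k) * (X 0 k - xstar k) ^ 2
          + Dinf ^ 2 * sfun ⟨T - 1, htlast⟩ k := by
    intro k
    have hconv : ∑ t : Fin T, (δ + sfun t k) *
          ((X t.val k - xstar k) ^ 2 - (X (t.val + 1) k - xstar k) ^ 2)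
        = ∑ n ∈ Finset.range T,
            (δ + sfun ⟨min n (T-1), by omega⟩ k) *
              ((X (min n T) k - xstar k) ^ 2 - (X (min (n+1) T) k - xstar k) ^ 2) := by
      rw [← Fin.sum_univ_eq_sum_range (fun n =>
        (δ + sfun ⟨min n (T-1), by omega⟩ k) *
          ((X (min n T) k - xstar k) ^ 2 - (X (min (n+1) T) k - xstar k) ^ 2)) T]
      refine Finset.sum_congr rfl fun t _ => ?_
      have ht := t.isLt
      have h1 : (⟨min t.val (T-1), by omega⟩ : Fin T) = t := Fin.ext (by simp; omega)
      have h2 : min t.val T = t.val := by omega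
      have h3 : min (t.val + 1) T = t.val + 1 := by omega
      rw [h1, h2, h3]
    rw [hconv]
    have habel := abel_telescope
      (fun n => δ + sfun ⟨min n (T-1), by omega⟩ k)
      (fun n => (X (min n T) k - xstar k) ^ 2)
      (fun n => by have := hsnn ⟨min n (T-1), by omega⟩ k; linarith)
      (fun n => by
        have hmin : min n (T-1) ≤ min (n+1) (T-1) := by omega
        have h := hsmono k ⟨min (n+1) (T-1), by omega⟩ ⟨min n (T-1), by omega⟩
          (by simpa [Fin.mk_le_mk] using hmin)
        linarith)
      (fun n => sq_nonneg _)
      (Dinf ^ 2)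
      (fun n => by
        have h := hD (min n T) (min_le_right _ _) k
        dsimp only
        calc (X (min n T) k - xstar k) ^ 2 = |X (min n T) k - xstar k| ^ 2 := (sq_abs _).symm
          _ ≤ Dinf ^ 2 := pow_le_pow_left₀ (abs_nonneg _) h 2)
      T hT
    dsimp only at habel
    have e1 : min 0 (T-1) = 0 := by omega
    have e2 : min 0 T = 0 := by omega
    have e3 : min (T-1) (T-1) = T-1 := by omega
    have f1 : (⟨min 0 (T-1), by omega⟩ : Fin T) = ⟨0, hT⟩ := Fin.ext (by simp [e1])
    have f3 : (⟨min (T-1) (T-1), by omega⟩ : Fin T) = ⟨T-1, htlast⟩ := Fin.ext (by simp [e3])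
    rw [f1, f3, e2] at habel
    have hs0 : 0 ≤ sfun ⟨0, hT⟩ k := hsnn _ _
    have hD2 : (0:ℝ) ≤ Dinf ^ 2 := sq_nonneg _
    nlinarith [habel]
  -- Term 2 per coordinate: sum over time of g^2/(δ+s) ≤ 2 sqrt(sum g^2)
  have hterm2 : ∀ k : (i : Fin B) × Fin (dsz i),
      ∑ t : Fin T, g t k ^ 2 / (δ + sfun t k)
        ≤ 2 * Real.sqrt (∑ t : Fin T, g t k ^ 2) := by
    intro k
    have hb : ∀ n : ℕ, 0 ≤ (if h : n < T then g ⟨n, h⟩ k ^ 2 else 0) := by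
      intro n; split
      · exact sq_nonneg _
      · exact le_refl 0
    have hconv : ∑ t : Fin T, g t k ^ 2 / (δ + sfun t k)
        = ∑ n ∈ Finset.range T, (if h : n < T then g ⟨n, h⟩ k ^ 2 else 0) /
            (δ + Real.sqrt (∑ r ∈ Finset.range (n+1),
              (if h : r < T then g ⟨r, h⟩ k ^ 2 else 0))) := by
      rw [← Fin.sum_univ_eq_sum_range (fun n =>
        (if h : n < T then g ⟨n, h⟩ k ^ 2 else 0) /
          (δ + Real.sqrt (∑ r ∈ Finset.range (n+1),
            (if h : r < T then g ⟨r, h⟩ k ^ 2 else 0)))) T]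
      refine Finset.sum_congr rfl fun t _ => ?_
      have ht := t.isLt
      have h1 : (if h : t.val < T then g ⟨t.val, h⟩ k ^ 2 else 0) = g t k ^ 2 := by
        rw [dif_pos ht]
      have h2 : sfun t k = Real.sqrt (∑ r ∈ Finset.range (t.val+1),
          (if h : r < T then g ⟨r, h⟩ k ^ 2 else 0)) := by
        rw [hs t k, fin_sum_Iic_eq t (fun r => g r k ^ 2)]
      rw [h1, ← h2]
    rw [hconv]
    have := sum_div_sqrt_le T δ hδ (fun n => if h : n < T then g ⟨n, h⟩ k ^ 2 else 0) hb
    have heq : ∑ n ∈ Finset.range T, (if h : n < T then g ⟨n, h⟩ k ^ 2 else 0)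
        = ∑ t : Fin T, g t k ^ 2 := by
      rw [← Fin.sum_univ_eq_sum_range (fun n => if h : n < T then g ⟨n, h⟩ k ^ 2 else 0) T]
      exact Finset.sum_congr rfl fun t _ => by rw [dif_pos t.isLt]
    rw [heq] at this
    exact this
  -- total squared-norm sums
  have hcolsum : ∀ i : Fin B, ∑ j : Fin (dsz i), ∑ t : Fin T, g t ⟨i, j⟩ ^ 2 = T := by
    intro i
    rw [Finset.sum_comm]
    rw [Finset.sum_congr rfl fun t _ => hnorm1 t i]
    simp
  have hM : ∀ i : Fin B, 0 < M i := fun i =>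
    lt_of_lt_of_le (hN0 ⟨0, hT⟩ i) (hN ⟨0, hT⟩ i).2
  -- assemble
  have hsum : ∑ t : Fin T, (inner ℝ (G t) (X t.val - xstar) : ℝ)
      = (1/(2*η)) * (∑ k : (i : Fin B) × Fin (dsz i), ∑ t : Fin T, (δ + sfun t k) *
            ((X t.val k - xstar k) ^ 2 - (X (t.val + 1) k - xstar k) ^ 2))
        + (η/2) * (∑ k : (i : Fin B) × Fin (dsz i), ∑ t : Fin T,
            blockNorm k.1 (G t) ^ 2 * g t k ^ 2 / (δ + sfun t k)) := by
    rw [Finset.sum_congr rfl fun t _ => hstep t, Finset.sum_add_distrib,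
      ← Finset.mul_sum, ← Finset.mul_sum]
    rw [Finset.sum_comm (γ := (i : Fin B) × Fin (dsz i)),
      Finset.sum_comm (γ := (i : Fin B) × Fin (dsz i))]
  rw [hsum]
  -- bound term 1
  have hbound1 : (∑ k : (i : Fin B) × Fin (dsz i), ∑ t : Fin T, (δ + sfun t k) *
        ((X t.val k - xstar k) ^ 2 - (X (t.val + 1) k - xstar k) ^ 2))
      ≤ (∑ k : (i : Fin B) × Fin (dsz i), (δ + sfun ⟨0, hT⟩ k) * (X 0 k - xstar k) ^ 2)
        + Dinf ^ 2 * Real.sqrt ((∑ i : Fin B, (dsz i : ℝ)) * ((T : ℝ) * B)) := by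
    calc (∑ k : (i : Fin B) × Fin (dsz i), ∑ t : Fin T, (δ + sfun t k) *
          ((X t.val k - xstar k) ^ 2 - (X (t.val + 1) k - xstar k) ^ 2))
        ≤ ∑ k : (i : Fin B) × Fin (dsz i),
            ((δ + sfun ⟨0, hT⟩ k) * (X 0 k - xstar k) ^ 2
              + Dinf ^ 2 * sfun ⟨T - 1, htlast⟩ k) :=
          Finset.sum_le_sum fun k _ => hterm1 k
      _ = (∑ k : (i : Fin B) × Fin (dsz i), (δ + sfun ⟨0, hT⟩ k) * (X 0 k - xstar k) ^ 2)
            + Dinf ^ 2 * ∑ k : (i : Fin B) × Fin (dsz i), sfun ⟨T - 1, htlast⟩ k := by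
          rw [Finset.sum_add_distrib, ← Finset.mul_sum]
      _ ≤ (∑ k : (i : Fin B) × Fin (dsz i), (δ + sfun ⟨0, hT⟩ k) * (X 0 k - xstar k) ^ 2)
            + Dinf ^ 2 * Real.sqrt ((∑ i : Fin B, (dsz i : ℝ)) * ((T : ℝ) * B)) := by
          refine add_le_add (le_refl _) (mul_le_mul_of_nonneg_left ?_ (sq_nonneg Dinf))
          have hIic : Finset.Iic (⟨T - 1, htlast⟩ : Fin T) = Finset.univ :=
            Finset.eq_univ_of_forall fun r => Finset.mem_Iic.mpr
              (by rw [Fin.le_def]; simp; omega)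
          have h1 : ∀ k : (i : Fin B) × Fin (dsz i), sfun ⟨T - 1, htlast⟩ k
              = Real.sqrt (∑ t : Fin T, g t k ^ 2) := by
            intro k; rw [hs, hIic]
          rw [Finset.sum_congr rfl fun k _ => h1 k]
          have h2 := sum_sqrt_le_sqrt_card_mul Finset.univ
            (fun k : (i : Fin B) × Fin (dsz i) => ∑ t : Fin T, g t k ^ 2)
            (fun k _ => Finset.sum_nonneg fun t _ => sq_nonneg _)
          have h3 : ∑ k : (i : Fin B) × Fin (dsz i), ∑ t : Fin T, g t k ^ 2
              = (T : ℝ) * B := by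
            rw [← Finset.univ_sigma_univ, Finset.sum_sigma]
            calc ∑ i : Fin B, ∑ j : Fin (dsz i), ∑ t : Fin T, g t ⟨i, j⟩ ^ 2
                = ∑ i : Fin B, (T : ℝ) := Finset.sum_congr rfl fun i _ => hcolsum i
              _ = (T : ℝ) * B := by simp [mul_comm]
          have h4 : ((Finset.univ : Finset ((i : Fin B) × Fin (dsz i))).card : ℝ)
              = ∑ i : Fin B, (dsz i : ℝ) := by
            simp [Finset.card_univ, Fintype.card_sigma]
          rw [h3, h4] at h2
          exact h2
  -- bound term 2
  have hbound2 : (∑ k : (i : Fin B) × Fin (dsz i), ∑ t : Fin T,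
        blockNorm k.1 (G t) ^ 2 * g t k ^ 2 / (δ + sfun t k))
      ≤ ∑ i : Fin B, M i ^ 2 * (2 * Real.sqrt ((dsz i : ℝ) * T)) := by
    calc (∑ k : (i : Fin B) × Fin (dsz i), ∑ t : Fin T,
          blockNorm k.1 (G t) ^ 2 * g t k ^ 2 / (δ + sfun t k))
        ≤ ∑ k : (i : Fin B) × Fin (dsz i), M k.1 ^ 2 * ∑ t : Fin T,
            g t k ^ 2 / (δ + sfun t k) := by
          refine Finset.sum_le_sum fun k _ => ?_
          rw [Finset.mul_sum]
          refine Finset.sum_le_sum fun t _ => ?_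
          rw [mul_div_assoc]
          refine mul_le_mul_of_nonneg_right ?_
            (div_nonneg (sq_nonneg _) (le_of_lt (hapos t k)))
          exact pow_le_pow_left₀ (le_of_lt (hN0 t k.1)) (hN t k.1).2 2
      _ ≤ ∑ k : (i : Fin B) × Fin (dsz i), M k.1 ^ 2 *
            (2 * Real.sqrt (∑ t : Fin T, g t k ^ 2)) := by
          refine Finset.sum_le_sum fun k _ => ?_
          exact mul_le_mul_of_nonneg_left (hterm2 k) (sq_nonneg _)
      _ = ∑ i : Fin B, M i ^ 2 * (2 * ∑ j : Fin (dsz i),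
            Real.sqrt (∑ t : Fin T, g t ⟨i, j⟩ ^ 2)) := by
          rw [← Finset.univ_sigma_univ, Finset.sum_sigma]
          exact Finset.sum_congr rfl fun i _ => by
            rw [Finset.mul_sum, Finset.mul_sum]
      _ ≤ ∑ i : Fin B, M i ^ 2 * (2 * Real.sqrt ((dsz i : ℝ) * T)) := by
          refine Finset.sum_le_sum fun i _ => ?_
          refine mul_le_mul_of_nonneg_left ?_ (sq_nonneg _)
          refine mul_le_mul_of_nonneg_left ?_ (by norm_num)
          have h2 := sum_sqrt_le_sqrt_card_mul Finset.univ
            (fun j : Fin (dsz i) => ∑ t : Fin T, g t ⟨i, j⟩ ^ 2)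
            (fun j _ => Finset.sum_nonneg fun t _ => sq_nonneg _)
          rw [hcolsum i] at h2
          simpa using h2
  -- finish
  have hη2 : (0:ℝ) < 1/(2*η) := by positivity
  have hfinal2 : (η/2) * (∑ i : Fin B, M i ^ 2 * (2 * Real.sqrt ((dsz i : ℝ) * T)))
      = ∑ i : Fin B, η * M i ^ 2 * Real.sqrt ((dsz i : ℝ) * T) := by
    rw [Finset.mul_sum]
    exact Finset.sum_congr rfl fun i _ => by ring
  have h1 := mul_le_mul_of_nonneg_left hbound1 (le_of_lt hη2)
  have h2 := mul_le_mul_of_nonneg_left hbound2 (by positivity : (0:ℝ) ≤ η/2)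
  rw [hfinal2] at h2
  calc (1/(2*η)) * (∑ k : (i : Fin B) × Fin (dsz i), ∑ t : Fin T, (δ + sfun t k) *
          ((X t.val k - xstar k) ^ 2 - (X (t.val + 1) k - xstar k) ^ 2))
        + (η/2) * (∑ k : (i : Fin B) × Fin (dsz i), ∑ t : Fin T,
            blockNorm k.1 (G t) ^ 2 * g t k ^ 2 / (δ + sfun t k))
      ≤ (1/(2*η)) * ((∑ k : (i : Fin B) × Fin (dsz i),
            (δ + sfun ⟨0, hT⟩ k) * (X 0 k - xstar k) ^ 2)
          + Dinf ^ 2 * Real.sqrt ((∑ i : Fin B, (dsz i : ℝ)) * ((T : ℝ) * B)))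
        + ∑ i : Fin B, η * M i ^ 2 * Real.sqrt ((dsz i : ℝ) * T) := by linarith
    _ = (1/(2*η)) * (∑ k : (i : Fin B) × Fin (dsz i),
            (δ + sfun ⟨0, hT⟩ k) * (X 0 k - xstar k) ^ 2)
        + Dinf ^ 2 * Real.sqrt ((∑ i : Fin B, (dsz i : ℝ)) * ((T : ℝ) * B)) / (2*η)
        + ∑ i : Fin B, η * M i ^ 2 * Real.sqrt ((dsz i : ℝ) * T) := by ring

lemma measurable_euclidean_pi {Ω : Type*} {m : MeasurableSpace Ω} {K : Type*}
    {f : Ω → EuclideanSpace ℝ K} (h : ∀ k, Measurable[m] fun ω => f ω k) :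
    Measurable[m] f := by
  have h1 := measurable_pi_iff.mpr h
  exact (WithLp.measurable_toLp 2 _).comp h1


/-- **AdaGradBNG convergence (Theorem 1, second inequality).**
`F (·) a` is convex and differentiable with gradient `F' y a` at every `y`, and
`f y = E_{a∼ν}[F y a]`.  The samples `ξ 0, …, ξ (T-1)` (representing
`ξ_1, …, ξ_T`) are i.i.d. with common distribution `ν` on a probability space
`(Ω, μ)`.  The iterates are indexed by `t = 0, …, T` (so `x 0 = x₁` is the
deterministic initial point), `g t` is the block-normalized stochastic gradient,
`s t k = ‖g_{1:t,k}‖₂`, `H_t = δ I + diag (s t)`, and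
`x (t+1) = x t − τ_t ∘ g t` with `τ_t ⟨i,j⟩ = η ‖F_i'(x_t,ξ_t)‖₂/(δ + s_t ⟨i,j⟩)`;
each `x t` is measurable with respect to the σ-algebra generated by
`ξ_1, …, ξ_{t-1}`.  Almost surely all block gradients along the trajectory are
nonzero with `‖F_i'(x_t,ξ_t)‖₂ ≤ M i` and `‖x_t − x*‖_∞ ≤ D∞`.  Then the average
iterate `x̄_T = (1/T) ∑_{t=1}^T x_t` satisfies
`E[f(x̄_T) − f(x*)] ≤ E[‖x₁ − x*‖²_{H_1}]/(2ηT) + D∞²√(Bd)/(2η√T)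
  + ∑_i η M_i² √(d_i)/√T`. -/
theorem adagrad_bng_expected_regret_second
    {Ω : Type*} [mΩ : MeasurableSpace Ω] (μ : Measure Ω) [IsProbabilityMeasure μ]
    {𝒳 : Type*} [m𝒳 : MeasurableSpace 𝒳] (ν : Measure 𝒳) [IsProbabilityMeasure ν]
    (B : ℕ) (dsz : Fin B → ℕ) (T : ℕ) (hT : 0 < T)
    (F : EuclideanSpace ℝ ((i : Fin B) × Fin (dsz i)) → 𝒳 → ℝ)
    (F' : EuclideanSpace ℝ ((i : Fin B) × Fin (dsz i)) → 𝒳 →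
      EuclideanSpace ℝ ((i : Fin B) × Fin (dsz i)))
    (hconv : ∀ a : 𝒳, ConvexOn ℝ Set.univ (fun y => F y a))
    (hgrad : ∀ (a : 𝒳) (y : EuclideanSpace ℝ ((i : Fin B) × Fin (dsz i))),
      HasGradientAt (fun z => F z a) (F' y a) y)
    (η δ : ℝ) (hη : 0 < η) (hδ : 0 < δ)
    -- the i.i.d. samples `ξ_1, …, ξ_T`, with common law `ν`
    (ξ : Fin T → Ω → 𝒳) (hξmeas : ∀ t, Measurable (ξ t))
    (hiid : iIndepFun ξ μ)
    (hident : ∀ t : Fin T, Measure.map (ξ t) μ = ν)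
    -- the iterates, block-normalized gradients and accumulated row norms
    (x : ℕ → Ω → EuclideanSpace ℝ ((i : Fin B) × Fin (dsz i)))
    (x₁ : EuclideanSpace ℝ ((i : Fin B) × Fin (dsz i)))
    (hx0 : ∀ ω, x 0 ω = x₁)
    (g : Fin T → Ω → EuclideanSpace ℝ ((i : Fin B) × Fin (dsz i)))
    (s : Fin T → Ω → ((i : Fin B) × Fin (dsz i)) → ℝ)
    (hg : ∀ (t : Fin T) (ω : Ω) (k : (i : Fin B) × Fin (dsz i)),
      g t ω k = F' (x t.val ω) (ξ t ω) k / blockNorm k.1 (F' (x t.val ω) (ξ t ω)))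
    (hs : ∀ (t : Fin T) (ω : Ω) (k : (i : Fin B) × Fin (dsz i)),
      s t ω k = Real.sqrt (∑ r ∈ Finset.Iic t, g r ω k ^ 2))
    (hupd : ∀ (t : Fin T) (ω : Ω) (k : (i : Fin B) × Fin (dsz i)),
      x (t.val + 1) ω k = x t.val ω k -
        (η * blockNorm k.1 (F' (x t.val ω) (ξ t ω)) / (δ + s t ω k)) * g t ω k)
    -- each iterate `x t` is a measurable function of the previous samples
    (hadapted : ∀ (t : Fin T) (k : (i : Fin B) × Fin (dsz i)),
      Measurable[⨆ r : Fin T, ⨆ _ : r < t, MeasurableSpace.comap (ξ r) m𝒳]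
        (fun ω => x t.val ω k))
    -- almost-sure bounds along the trajectory
    (M : Fin B → ℝ) (xstar : EuclideanSpace ℝ ((i : Fin B) × Fin (dsz i)))
    (Dinf : ℝ) (hDinf : 0 < Dinf)
    (hAS : ∀ᵐ ω ∂μ,
      (∀ (t : Fin T) (i : Fin B),
        blockNorm i (F' (x t.val ω) (ξ t ω)) ≠ 0 ∧
        blockNorm i (F' (x t.val ω) (ξ t ω)) ≤ M i) ∧
      (∀ t ≤ T, ∀ k : (i : Fin B) × Fin (dsz i), |x t ω k - xstar k| ≤ Dinf))
    -- regularity conditions making all the expectations well defined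
    (hFmeas : ∀ y, Measurable (fun a => F y a))
    (hFint : ∀ y, Integrable (fun a => F y a) ν)
    (hintAvg : Integrable (fun ω =>
      ∫ a, F ((T : ℝ)⁻¹ • ∑ t ∈ Finset.range T, x t ω) a ∂ν) μ)
    (hintIter : ∀ t : Fin T, Integrable (fun ω => F (x t.val ω) (ξ t ω)) μ)
    (hintH1 : Integrable (fun ω =>
      ∑ k : (i : Fin B) × Fin (dsz i),
        (δ + s ⟨0, hT⟩ ω k) * (x₁ k - xstar k) ^ 2) μ)
    (hintRow : ∀ i : Fin B, Integrable (fun ω =>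
      ∑ j : Fin (dsz i), Real.sqrt (∑ t : Fin T, g t ω ⟨i, j⟩ ^ 2)) μ) :
    ∫ ω, ((∫ a, F ((T : ℝ)⁻¹ • ∑ t ∈ Finset.range T, x t ω) a ∂ν)
        - ∫ a, F xstar a ∂ν) ∂μ ≤
      (∫ ω, ∑ k : (i : Fin B) × Fin (dsz i),
          (δ + s ⟨0, hT⟩ ω k) * (x₁ k - xstar k) ^ 2 ∂μ) / (2 * η * T)
      + Dinf ^ 2 * Real.sqrt ((B : ℝ) * ∑ i : Fin B, (dsz i : ℝ))
          / (2 * η * Real.sqrt T)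
      + ∑ i : Fin B, η * M i ^ 2 * Real.sqrt (dsz i) / Real.sqrt T := by
  classical
  have hTR : (0:ℝ) < T := by exact_mod_cast hT
  -- continuity of F in its first argument
  have hFcont : ∀ a, Continuous fun y => F y a := fun a =>
    continuous_iff_continuousAt.mpr fun y => (hgrad a y).hasFDerivAt.continuousAt
  -- measurability of the iterates
  have hxmeasG : ∀ t : Fin T,
      Measurable[⨆ r : Fin T, ⨆ _ : r < t, MeasurableSpace.comap (ξ r) m𝒳]
        (fun ω => x t.val ω) := fun t => measurable_euclidean_pi (hadapted t)
  have hxmeas : ∀ t : Fin T, Measurable (fun ω => x t.val ω) := fun t =>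
    (hxmeasG t).mono (iSup_le fun r => iSup_le fun _ => (hξmeas r).comap_le) le_rfl
  -- independence and the key integral identity
  have hkey : ∀ t : Fin T,
      (∫ ω, F (x t.val ω) (ξ t ω) ∂μ = ∫ ω, (∫ a, F (x t.val ω) a ∂ν) ∂μ)
      ∧ Integrable (fun ω => ∫ a, F (x t.val ω) a ∂ν) μ := fun t =>
    key_indep_integral μ ν F hFcont hFmeas (fun ω => x t.val ω) (ξ t)
      (hxmeas t) (hξmeas t)
      (indep_part μ ξ hξmeas hiid (fun ω => x t.val ω) t (hxmeasG t))
      (hident t) (hintIter t)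
  -- integral of F xstar over samples
  have hFxstar_int : ∀ t : Fin T, Integrable (fun ω => F xstar (ξ t ω)) μ := by
    intro t
    have h := hFint xstar
    rw [← hident t] at h
    exact (integrable_map_measure (hFmeas xstar).aestronglyMeasurable
      (hξmeas t).aemeasurable).mp h
  have hFxstar_eq : ∀ t : Fin T, ∫ ω, F xstar (ξ t ω) ∂μ = ∫ a, F xstar a ∂ν := by
    intro t
    rw [← hident t, integral_map (hξmeas t).aemeasurable
      (hFmeas xstar).aestronglyMeasurable]
  -- pathwise bound, almost surely
  have hASbound : ∀ᵐ ω ∂μ,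
      ∑ t : Fin T, (F (x t.val ω) (ξ t ω) - F xstar (ξ t ω))
        ≤ (1/(2*η)) * (∑ k : (i : Fin B) × Fin (dsz i),
              (δ + s ⟨0, hT⟩ ω k) * (x₁ k - xstar k) ^ 2)
          + (Dinf ^ 2 * Real.sqrt ((∑ i : Fin B, (dsz i : ℝ)) * ((T : ℝ) * B)) / (2*η)
            + ∑ i : Fin B, η * M i ^ 2 * Real.sqrt ((dsz i : ℝ) * T)) := by
    filter_upwards [hAS] with ω hω
    obtain ⟨hω1, hω2⟩ := hω
    have hconvstep : ∀ t : Fin T,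
        F (x t.val ω) (ξ t ω) - F xstar (ξ t ω)
          ≤ (inner ℝ (F' (x t.val ω) (ξ t ω)) (x t.val ω - xstar) : ℝ) := by
      intro t
      have h := convex_grad_ineq (hconv (ξ t ω)) (hgrad (ξ t ω) (x t.val ω)) xstar
      have h2 : (inner ℝ (F' (x t.val ω) (ξ t ω)) (xstar - x t.val ω) : ℝ)
          = - (inner ℝ (F' (x t.val ω) (ξ t ω)) (x t.val ω - xstar) : ℝ) := by
        rw [← inner_neg_right, neg_sub]
      rw [h2] at h
      linarith
    have hpw := pathwise_bound hT hη hδ hDinf (fun n => x n ω)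
      (fun t => F' (x t.val ω) (ξ t ω)) (fun t k => g t ω k) (fun t k => s t ω k)
      M xstar (fun t k => hg t ω k) (fun t k => hs t ω k) (fun t k => hupd t ω k)
      hω1 (fun t ht k => hω2 t ht k)
    simp only [hx0] at hpw
    calc ∑ t : Fin T, (F (x t.val ω) (ξ t ω) - F xstar (ξ t ω))
        ≤ ∑ t : Fin T, (inner ℝ (F' (x t.val ω) (ξ t ω)) (x t.val ω - xstar) : ℝ) :=
          Finset.sum_le_sum fun t _ => hconvstep t
      _ ≤ _ := le_trans hpw (le_of_eq (by ring))
  -- integrate the pathwise bound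
  have hsum_int : Integrable (fun ω => ∑ t : Fin T,
      (F (x t.val ω) (ξ t ω) - F xstar (ξ t ω))) μ :=
    integrable_finset_sum _ fun t _ => (hintIter t).sub (hFxstar_int t)
  have hRHS_int : Integrable (fun ω =>
      (1/(2*η)) * (∑ k : (i : Fin B) × Fin (dsz i),
          (δ + s ⟨0, hT⟩ ω k) * (x₁ k - xstar k) ^ 2)
        + (Dinf ^ 2 * Real.sqrt ((∑ i : Fin B, (dsz i : ℝ)) * ((T : ℝ) * B)) / (2*η)
          + ∑ i : Fin B, η * M i ^ 2 * Real.sqrt ((dsz i : ℝ) * T))) μ :=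
    (hintH1.const_mul _).add (integrable_const _)
  have hEineq := integral_mono_ae hsum_int hRHS_int hASbound
  have hLHSeq : ∫ ω, (∑ t : Fin T, (F (x t.val ω) (ξ t ω) - F xstar (ξ t ω))) ∂μ
      = ∑ t : Fin T, ((∫ ω, (∫ a, F (x t.val ω) a ∂ν) ∂μ) - ∫ a, F xstar a ∂ν) := by
    rw [integral_finset_sum Finset.univ
      (f := fun (t : Fin T) (ω : Ω) => F (x t.val ω) (ξ t ω) - F xstar (ξ t ω))
      (fun t _ => (hintIter t).sub (hFxstar_int t))]
    refine Finset.sum_congr rfl fun t _ => ?_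
    rw [integral_sub (hintIter t) (hFxstar_int t), (hkey t).1, hFxstar_eq t]
  have hRHSeq : ∫ ω, ((1/(2*η)) * (∑ k : (i : Fin B) × Fin (dsz i),
          (δ + s ⟨0, hT⟩ ω k) * (x₁ k - xstar k) ^ 2)
        + (Dinf ^ 2 * Real.sqrt ((∑ i : Fin B, (dsz i : ℝ)) * ((T : ℝ) * B)) / (2*η)
          + ∑ i : Fin B, η * M i ^ 2 * Real.sqrt ((dsz i : ℝ) * T))) ∂μ
      = (1/(2*η)) * (∫ ω, ∑ k : (i : Fin B) × Fin (dsz i),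
          (δ + s ⟨0, hT⟩ ω k) * (x₁ k - xstar k) ^ 2 ∂μ)
        + (Dinf ^ 2 * Real.sqrt ((∑ i : Fin B, (dsz i : ℝ)) * ((T : ℝ) * B)) / (2*η)
          + ∑ i : Fin B, η * M i ^ 2 * Real.sqrt ((dsz i : ℝ) * T)) := by
    rw [integral_add (hintH1.const_mul _) (integrable_const _), integral_const_mul,
      integral_const]
    simp
  rw [hLHSeq, hRHSeq] at hEineq
  -- Jensen for the averaged iterate, pointwise in ω
  have hpt : ∀ ω, (∫ a, F ((T : ℝ)⁻¹ • ∑ t ∈ Finset.range T, x t ω) a ∂ν)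
      ≤ (T:ℝ)⁻¹ * ∑ t : Fin T, ∫ a, F (x t.val ω) a ∂ν := by
    intro ω
    have hjens : ∀ a, F ((T : ℝ)⁻¹ • ∑ t ∈ Finset.range T, x t ω) a
        ≤ ∑ t : Fin T, (T:ℝ)⁻¹ * F (x t.val ω) a := by
      intro a
      have h1 : ((T : ℝ)⁻¹ • ∑ t ∈ Finset.range T, x t ω)
          = ∑ t : Fin T, (T:ℝ)⁻¹ • x t.val ω := by
        rw [Finset.smul_sum, ← Fin.sum_univ_eq_sum_range (fun n => (T:ℝ)⁻¹ • x n ω) T]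
      rw [h1]
      have hw1 : ∑ _t : Fin T, (T:ℝ)⁻¹ = 1 := by
        rw [Finset.sum_const, Finset.card_univ, Fintype.card_fin, nsmul_eq_mul]
        field_simp
      have := (hconv a).map_sum_le (t := Finset.univ) (w := fun _ : Fin T => (T:ℝ)⁻¹)
        (p := fun t : Fin T => x t.val ω) (fun _ _ => by positivity) hw1
        (fun _ _ => Set.mem_univ _)
      simpa [smul_eq_mul] using this
    calc (∫ a, F ((T : ℝ)⁻¹ • ∑ t ∈ Finset.range T, x t ω) a ∂ν)
        ≤ ∫ a, (∑ t : Fin T, (T:ℝ)⁻¹ * F (x t.val ω) a) ∂ν :=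
          integral_mono (hFint _)
            (integrable_finset_sum _ fun t _ => (hFint _).const_mul _) hjens
      _ = ∑ t : Fin T, (T:ℝ)⁻¹ * ∫ a, F (x t.val ω) a ∂ν := by
          rw [integral_finset_sum _ fun t _ => (hFint _).const_mul _]
          exact Finset.sum_congr rfl fun t _ => integral_const_mul _ _
      _ = (T:ℝ)⁻¹ * ∑ t : Fin T, ∫ a, F (x t.val ω) a ∂ν := by
          rw [Finset.mul_sum]
  have hAvgInt2 : Integrable (fun ω =>
      (T:ℝ)⁻¹ * ∑ t : Fin T, ∫ a, F (x t.val ω) a ∂ν) μ :=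
    (integrable_finset_sum _ fun t _ => (hkey t).2).const_mul _
  have hAvg_le : ∫ ω, (∫ a, F ((T : ℝ)⁻¹ • ∑ t ∈ Finset.range T, x t ω) a ∂ν) ∂μ
      ≤ (T:ℝ)⁻¹ * ∑ t : Fin T, ∫ ω, (∫ a, F (x t.val ω) a ∂ν) ∂μ := by
    calc ∫ ω, (∫ a, F ((T : ℝ)⁻¹ • ∑ t ∈ Finset.range T, x t ω) a ∂ν) ∂μ
        ≤ ∫ ω, ((T:ℝ)⁻¹ * ∑ t : Fin T, ∫ a, F (x t.val ω) a ∂ν) ∂μ :=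
          integral_mono hintAvg hAvgInt2 hpt
      _ = (T:ℝ)⁻¹ * ∑ t : Fin T, ∫ ω, (∫ a, F (x t.val ω) a ∂ν) ∂μ := by
          rw [integral_const_mul, integral_finset_sum _ fun t _ => (hkey t).2]
  have hgoalLHS : ∫ ω, ((∫ a, F ((T : ℝ)⁻¹ • ∑ t ∈ Finset.range T, x t ω) a ∂ν)
        - ∫ a, F xstar a ∂ν) ∂μ
      = (∫ ω, (∫ a, F ((T : ℝ)⁻¹ • ∑ t ∈ Finset.range T, x t ω) a ∂ν) ∂μ)
        - ∫ a, F xstar a ∂ν := by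
    rw [integral_sub hintAvg (integrable_const _), integral_const]
    simp
  rw [hgoalLHS]
  have hchain : (∫ ω, (∫ a, F ((T : ℝ)⁻¹ • ∑ t ∈ Finset.range T, x t ω) a ∂ν) ∂μ)
        - ∫ a, F xstar a ∂ν
      ≤ (T:ℝ)⁻¹ * ∑ t : Fin T,
          ((∫ ω, (∫ a, F (x t.val ω) a ∂ν) ∂μ) - ∫ a, F xstar a ∂ν) := by
    rw [Finset.sum_sub_distrib, Finset.sum_const, Finset.card_univ, Fintype.card_fin,
      nsmul_eq_mul, mul_sub]
    have hc : (T:ℝ)⁻¹ * ((T:ℝ) * ∫ a, F xstar a ∂ν) = ∫ a, F xstar a ∂ν := by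
      field_simp
    rw [hc]
    exact sub_le_sub_right hAvg_le _
  refine le_trans hchain ?_
  have hfinal : (T:ℝ)⁻¹ * (∑ t : Fin T,
        ((∫ ω, (∫ a, F (x t.val ω) a ∂ν) ∂μ) - ∫ a, F xstar a ∂ν))
      ≤ (T:ℝ)⁻¹ * ((1/(2*η)) * (∫ ω, ∑ k : (i : Fin B) × Fin (dsz i),
            (δ + s ⟨0, hT⟩ ω k) * (x₁ k - xstar k) ^ 2 ∂μ)
          + (Dinf ^ 2 * Real.sqrt ((∑ i : Fin B, (dsz i : ℝ)) * ((T : ℝ) * B)) / (2*η)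
            + ∑ i : Fin B, η * M i ^ 2 * Real.sqrt ((dsz i : ℝ) * T))) :=
    mul_le_mul_of_nonneg_left hEineq (by positivity)
  refine le_trans hfinal (le_of_eq ?_)
  -- final arithmetic
  have hsT : Real.sqrt T * Real.sqrt T = (T:ℝ) := Real.mul_self_sqrt (le_of_lt hTR)
  have hsT0 : (0:ℝ) < Real.sqrt T := Real.sqrt_pos.mpr hTR
  have e1 : Real.sqrt ((∑ i : Fin B, (dsz i : ℝ)) * ((T : ℝ) * B))
      = Real.sqrt ((B:ℝ) * ∑ i : Fin B, (dsz i : ℝ)) * Real.sqrt T := by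
    rw [show (∑ i : Fin B, (dsz i : ℝ)) * ((T : ℝ) * B)
        = ((B:ℝ) * ∑ i : Fin B, (dsz i : ℝ)) * (T:ℝ) by ring,
      Real.sqrt_mul (by positivity)]
  have e2 : ∀ i : Fin B, Real.sqrt ((dsz i : ℝ) * T)
      = Real.sqrt (dsz i) * Real.sqrt T := fun i =>
    Real.sqrt_mul (Nat.cast_nonneg _) _
  have e3 : ∑ i : Fin B, η * M i ^ 2 * Real.sqrt ((dsz i : ℝ) * T)
      = (∑ i : Fin B, η * M i ^ 2 * Real.sqrt (dsz i)) * Real.sqrt T := by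
    rw [Finset.sum_mul]
    exact Finset.sum_congr rfl fun i _ => by rw [e2 i]; ring
  rw [e1, e3]
  rw [show ∑ i : Fin B, η * M i ^ 2 * Real.sqrt (dsz i) / Real.sqrt T
      = (∑ i : Fin B, η * M i ^ 2 * Real.sqrt (dsz i)) / Real.sqrt T by
    rw [Finset.sum_div]]
  set A := ∫ ω, ∑ k : (i : Fin B) × Fin (dsz i),
      (δ + s ⟨0, hT⟩ ω k) * (x₁ k - xstar k) ^ 2 ∂μ with hAdef
  set P := Real.sqrt ((B:ℝ) * ∑ i : Fin B, (dsz i : ℝ)) with hPdef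
  set Q := ∑ i : Fin B, η * M i ^ 2 * Real.sqrt (dsz i) with hQdef
  set u := Real.sqrt (T:ℝ) with hudef
  have huu : u * u = (T:ℝ) := hsT
  have hu0 : u ≠ 0 := ne_of_gt hsT0
  rw [← huu]
  field_simp
  ring
end

section
/- Deterministic regret bound for AdaGradBNG (pathwise form of Theorem 1, first inequality). Fix any realization of the samples ξ_1,…,ξ_T and run the AdaGrad with Block-Normalized Gradient updates with parameters η > 0, δ > 0. Suppose each function F(·,ξ_t) is convex and differentiable, every block gradient F_i'(x_t,ξ_t) is nonzero with ‖F_i'(x_t,ξ_t)‖₂ ≤ M_i for all t and i, and ‖x_t − x*‖_∞ ≤ D_∞ for all t, for a fixed point x* ∈ R^d. Then (1/T)∑_{t=1}^T [F(x_t,ξ_t) − F(x*,ξ_t)] ≤ ‖x_1 − x*‖²_{H_1}/(2ηT) + D_∞²√(Bd)/(2η√T) + ∑_{i=1}^B (η M_i²/T) · ∑_{j = d_1+…+d_{i−1}+1}^{d_1+…+d_i} ‖g_{1:T,j}‖₂. -/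
/-- First-order condition for a convex differentiable function:
`⟪∇f(p), q - p⟫ ≤ f q - f p`. -/
lemma grad_ineq_aux {E : Type*} [NormedAddCommGroup E] [InnerProductSpace ℝ E] [CompleteSpace E]
    {f : E → ℝ} {G p : E} (hf : ConvexOn ℝ Set.univ f) (hG : HasGradientAt f G p) (q : E) :
    (inner ℝ G (q - p) : ℝ) ≤ f q - f p := by
  set v := q - p with hv
  have hF : HasFDerivAt f (InnerProductSpace.toDual ℝ E G) p := hG.hasFDerivAt
  have hF0 : HasFDerivAt f (InnerProductSpace.toDual ℝ E G) ((0:ℝ) • v + p) := by simpa using hF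
  have hc : HasDerivAt (fun θ : ℝ => θ • v + p) v 0 := by
    simpa using ((hasDerivAt_id (0:ℝ)).smul_const v).add_const p
  have hφ : HasDerivAt (fun θ : ℝ => f (θ • v + p)) (inner ℝ G v : ℝ) 0 := by
    have h := hF0.comp_hasDerivAt (x := (0:ℝ)) hc
    rw [InnerProductSpace.toDual_apply_apply] at h
    exact h
  have hφc : ConvexOn ℝ Set.univ (fun θ : ℝ => f (θ • v + p)) := by
    have h := hf.comp_affineMap (AffineMap.lineMap p q : ℝ →ᵃ[ℝ] E)
    simp only [Set.preimage_univ] at h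
    have he : (fun θ : ℝ => f (θ • v + p)) = (f ∘ (AffineMap.lineMap p q : ℝ →ᵃ[ℝ] E)) := by
      funext θ
      simp [AffineMap.lineMap_apply, hv, Function.comp]
    rw [he]; exact h
  have hslope := hφc.le_slope_of_hasDerivWithinAt_Ioi (Set.mem_univ (0:ℝ)) (Set.mem_univ (1:ℝ))
    one_pos hφ.hasDerivWithinAt
  rw [slope_def_field] at hslope
  simpa [hv] using hslope

set_option maxHeartbeats 1000000 in
/-- **Deterministic regret bound for AdaGrad with Block-Normalized Gradient**
(pathwise form of Theorem 1, first inequality).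

Iterations are indexed by `t = 0, 1, …, T-1` (corresponding to `t = 1, …, T` in the
paper), so `x 0` is the initial point `x_1`, `ξ t` is the fixed realization of the
`t`-th sample, `F' y a` is the gradient of the convex differentiable function
`F (·) a` at `y`, `g t` is the block-normalized gradient at iteration `t`,
`s t k = ‖g_{1:t,k}‖₂` collects the row norms, `H_t = δ I + diag (s t)`, and the
update is `x (t+1) = x t − τ_t ∘ g t` with
`τ_t ⟨i,j⟩ = η ‖F_i'(x_t,ξ_t)‖₂ / (δ + s_t ⟨i,j⟩)`.  Assuming every block gradient
along the trajectory is nonzero with `‖F_i'(x_t,ξ_t)‖₂ ≤ M i` and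
`‖x_t − x*‖_∞ ≤ D∞`, the average regret is bounded by
`‖x_1 − x*‖²_{H_1}/(2ηT) + D∞²√(Bd)/(2η√T)
  + ∑_i (η M_i²/T) ∑_{j ∈ block i} ‖g_{1:T,j}‖₂`. -/
theorem adagrad_bng_pathwise_regret_first (B : ℕ) (dsz : Fin B → ℕ)
    (𝒳 : Type*) (T : ℕ) (hT : 0 < T) (ξ : ℕ → 𝒳)
    (F : EuclideanSpace ℝ ((i : Fin B) × Fin (dsz i)) → 𝒳 → ℝ)
    (F' : EuclideanSpace ℝ ((i : Fin B) × Fin (dsz i)) → 𝒳 →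
      EuclideanSpace ℝ ((i : Fin B) × Fin (dsz i)))
    (hconv : ∀ t < T, ConvexOn ℝ Set.univ (fun y => F y (ξ t)))
    (hgrad : ∀ t < T, ∀ y, HasGradientAt (fun z => F z (ξ t)) (F' y (ξ t)) y)
    (η δ : ℝ) (hη : 0 < η) (hδ : 0 < δ)
    (x : ℕ → EuclideanSpace ℝ ((i : Fin B) × Fin (dsz i)))
    (g : ℕ → EuclideanSpace ℝ ((i : Fin B) × Fin (dsz i)))
    (s : ℕ → ((i : Fin B) × Fin (dsz i)) → ℝ)
    (hg : ∀ t < T, ∀ k : (i : Fin B) × Fin (dsz i),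
      g t k = F' (x t) (ξ t) k / blockNorm k.1 (F' (x t) (ξ t)))
    (hs : ∀ t < T, ∀ k : (i : Fin B) × Fin (dsz i),
      s t k = Real.sqrt (∑ r ∈ Finset.range (t + 1), g r k ^ 2))
    (hupd : ∀ t < T, ∀ k : (i : Fin B) × Fin (dsz i),
      x (t + 1) k = x t k -
        (η * blockNorm k.1 (F' (x t) (ξ t)) / (δ + s t k)) * g t k)
    (M : Fin B → ℝ) (xstar : EuclideanSpace ℝ ((i : Fin B) × Fin (dsz i)))
    (Dinf : ℝ) (hDinf : 0 < Dinf)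
    (hnz : ∀ t < T, ∀ i : Fin B, blockNorm i (F' (x t) (ξ t)) ≠ 0)
    (hM : ∀ t < T, ∀ i : Fin B, blockNorm i (F' (x t) (ξ t)) ≤ M i)
    (hD : ∀ t ≤ T, ∀ k : (i : Fin B) × Fin (dsz i), |x t k - xstar k| ≤ Dinf) :
    (1 / (T : ℝ)) * ∑ t ∈ Finset.range T, (F (x t) (ξ t) - F xstar (ξ t)) ≤
      (∑ k : (i : Fin B) × Fin (dsz i), (δ + s 0 k) * (x 0 k - xstar k) ^ 2)
        / (2 * η * T)
      + Dinf ^ 2 * Real.sqrt ((B : ℝ) * ∑ i : Fin B, (dsz i : ℝ))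
          / (2 * η * Real.sqrt T)
      + ∑ i : Fin B, (η * M i ^ 2 / T) *
          ∑ j : Fin (dsz i), Real.sqrt (∑ t ∈ Finset.range T, g t ⟨i, j⟩ ^ 2) := by
  classical
  have hNpos : ∀ t < T, ∀ i : Fin B, 0 < blockNorm i (F' (x t) (ξ t)) := by
    intro t ht i
    exact lt_of_le_of_ne (Real.sqrt_nonneg _) (Ne.symm (hnz t ht i))
  have hF'eq : ∀ t < T, ∀ k : (i : Fin B) × Fin (dsz i),
      F' (x t) (ξ t) k = blockNorm k.1 (F' (x t) (ξ t)) * g t k := by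
    intro t ht k
    rw [hg t ht k, mul_div_cancel₀ _ (hnz t ht k.1)]
  have hs_nonneg : ∀ t < T, ∀ k, 0 ≤ s t k := by
    intro t ht k; rw [hs t ht k]; exact Real.sqrt_nonneg _
  have hs_sq : ∀ t < T, ∀ k, s t k ^ 2 = ∑ r ∈ Finset.range (t + 1), g r k ^ 2 := by
    intro t ht k; rw [hs t ht k, Real.sq_sqrt]; positivity
  have hPpos : ∀ t < T, ∀ k, 0 < δ + s t k := by
    intro t ht k; have := hs_nonneg t ht k; linarith
  have hs_mono : ∀ t, t + 1 < T → ∀ k, s t k ≤ s (t + 1) k := by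
    intro t ht k
    have h1 := hs_sq t (by omega) k
    have h2 := hs_sq (t + 1) ht k
    rw [Finset.sum_range_succ, ← h1] at h2
    have h3 := hs_nonneg t (by omega) k
    have h4 := hs_nonneg (t + 1) ht k
    nlinarith [sq_nonneg (g (t + 1) k)]
  have hDsq : ∀ t ≤ T, ∀ k, (x t k - xstar k) ^ 2 ≤ Dinf ^ 2 := by
    intro t ht k
    have h := hD t ht k
    have h0 := abs_nonneg (x t k - xstar k)
    nlinarith [sq_abs (x t k - xstar k)]
  -- per-step per-coordinate identity (from the update rule)
  have hstep : ∀ t < T, ∀ k : (i : Fin B) × Fin (dsz i),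
      F' (x t) (ξ t) k * (x t k - xstar k)
        = (δ + s t k) / (2 * η) * ((x t k - xstar k) ^ 2 - (x (t + 1) k - xstar k) ^ 2)
          + η / (2 * (δ + s t k)) * (F' (x t) (ξ t) k) ^ 2 := by
    intro t ht k
    have hP := hPpos t ht k
    rw [hupd t ht k, hF'eq t ht k]
    field_simp
    ring
  -- convexity: regret at step t is bounded by the inner product
  have hreg : ∀ t < T, F (x t) (ξ t) - F xstar (ξ t)
      ≤ ∑ k : (i : Fin B) × Fin (dsz i), F' (x t) (ξ t) k * (x t k - xstar k) := by
    intro t ht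
    have h := grad_ineq_aux (hconv t ht) (hgrad t ht (x t)) xstar
    have hinner : (inner ℝ (F' (x t) (ξ t)) (xstar - x t) : ℝ)
        = ∑ k : (i : Fin B) × Fin (dsz i), F' (x t) (ξ t) k * (xstar k - x t k) := by
      simp [PiLp.inner_apply, RCLike.inner_apply]
      exact Finset.sum_congr rfl fun _ _ => mul_comm _ _
    rw [hinner] at h
    have he : ∑ k : (i : Fin B) × Fin (dsz i), F' (x t) (ξ t) k * (xstar k - x t k)
        = - ∑ k : (i : Fin B) × Fin (dsz i), F' (x t) (ξ t) k * (x t k - xstar k) := by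
      rw [← Finset.sum_neg_distrib]; apply Finset.sum_congr rfl; intro k _; ring
    rw [he] at h
    linarith
  -- Abel-summation bound on the first term, per coordinate
  have habel : ∀ k : (i : Fin B) × Fin (dsz i),
      ∑ t ∈ Finset.range T,
          (δ + s t k) * ((x t k - xstar k) ^ 2 - (x (t + 1) k - xstar k) ^ 2)
        ≤ (δ + s 0 k) * (x 0 k - xstar k) ^ 2 + Dinf ^ 2 * s (T - 1) k := by
    intro k
    have haux : ∀ n, n < T →
        ∑ t ∈ Finset.range (n + 1),
            (δ + s t k) * ((x t k - xstar k) ^ 2 - (x (t + 1) k - xstar k) ^ 2)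
          + (δ + s n k) * (x (n + 1) k - xstar k) ^ 2
        ≤ (δ + s 0 k) * (x 0 k - xstar k) ^ 2 + Dinf ^ 2 * (s n k - s 0 k) := by
      intro n
      induction n with
      | zero =>
        intro h0
        rw [Finset.sum_range_one]
        apply le_of_eq
        ring
      | succ m ih =>
        intro hm
        have ihm := ih (by omega)
        rw [Finset.sum_range_succ]
        have h1 := hs_mono m hm k
        have h2 := hDsq (m + 1) (by omega) k
        nlinarith [mul_le_mul_of_nonneg_left h2 (sub_nonneg.mpr h1),
          sq_nonneg (x (m + 1) k - xstar k)]
    have h := haux (T - 1) (by omega)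
    have hTT : T - 1 + 1 = T := by omega
    rw [hTT] at h
    have h3 := hPpos (T - 1) (by omega) k
    have h4 := hs_nonneg 0 (by omega) k
    nlinarith [mul_nonneg (sq_nonneg Dinf) h4,
      mul_nonneg h3.le (sq_nonneg (x T k - xstar k))]
  -- bound on the adaptive sum, per coordinate
  have hsum2 : ∀ k : (i : Fin B) × Fin (dsz i),
      ∑ t ∈ Finset.range T, g t k ^ 2 / (δ + s t k) ≤ 2 * s (T - 1) k := by
    intro k
    
    have haux : ∀ n, n < T →
        ∑ t ∈ Finset.range (n + 1), g t k ^ 2 / (δ + s t k) ≤ 2 * s n k := by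
      intro n
      induction n with
      | zero =>
        intro h0
        rw [Finset.sum_range_one]
        have h1 : s 0 k ^ 2 = g 0 k ^ 2 := by rw [hs_sq 0 h0 k, Finset.sum_range_one]
        have hP := hPpos 0 h0 k
        have h2 := hs_nonneg 0 h0 k
        rw [div_le_iff₀ hP]
        nlinarith [mul_nonneg h2 hδ.le, sq_nonneg (s 0 k)]
      | succ m ih =>
        intro hm
        have ihm := ih (by omega)
        rw [Finset.sum_range_succ]
        have h1 : s (m + 1) k ^ 2 = s m k ^ 2 + g (m + 1) k ^ 2 := by
          rw [hs_sq (m + 1) hm k, Finset.sum_range_succ, ← hs_sq m (by omega) k]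
        have hP := hPpos (m + 1) hm k
        have hmono := hs_mono m hm k
        have h0 := hs_nonneg m (by omega) k
        have hlast : g (m + 1) k ^ 2 / (δ + s (m + 1) k) ≤ 2 * (s (m + 1) k - s m k) := by
          rw [div_le_iff₀ hP]
          nlinarith [mul_nonneg (sub_nonneg.mpr hmono)
            (by linarith : (0:ℝ) ≤ 2 * δ + s (m + 1) k - s m k)]
        linarith
    have h := haux (T - 1) (by omega)
    rwa [Nat.sub_add_cancel hT] at h
  -- bound the second term pointwise using `M`
  have hterm2 : ∀ t < T, ∀ k : (i : Fin B) × Fin (dsz i),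
      η / (2 * (δ + s t k)) * (F' (x t) (ξ t) k) ^ 2
        ≤ (η * M k.1 ^ 2 / 2) * (g t k ^ 2 / (δ + s t k)) := by
    intro t ht k
    have hP := hPpos t ht k
    have hN := hNpos t ht k.1
    have hMk := hM t ht k.1
    have hN2 : blockNorm k.1 (F' (x t) (ξ t)) ^ 2 ≤ M k.1 ^ 2 := by nlinarith
    rw [hF'eq t ht k]
    calc η / (2 * (δ + s t k)) * (blockNorm k.1 (F' (x t) (ξ t)) * g t k) ^ 2
        = η * (blockNorm k.1 (F' (x t) (ξ t)) ^ 2 * g t k ^ 2) / (2 * (δ + s t k)) := by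
          ring
      _ ≤ η * (M k.1 ^ 2 * g t k ^ 2) / (2 * (δ + s t k)) := by gcongr
      _ = (η * M k.1 ^ 2 / 2) * (g t k ^ 2 / (δ + s t k)) := by
          field_simp
  -- squared norm of block-normalized gradient is B
  have hgsq : ∀ t < T, ∑ k : (i : Fin B) × Fin (dsz i), g t k ^ 2 = (B : ℝ) := by
    intro t ht
    rw [← Finset.univ_sigma_univ, Finset.sum_sigma]
    have hone : ∀ i : Fin B, ∑ j : Fin (dsz i), g t ⟨i, j⟩ ^ 2 = 1 := by
      intro i
      have hN := hNpos t ht i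
      have hNsq : blockNorm i (F' (x t) (ξ t)) ^ 2
          = ∑ j : Fin (dsz i), F' (x t) (ξ t) ⟨i, j⟩ ^ 2 := by
        rw [blockNorm, Real.sq_sqrt]; positivity
      calc ∑ j : Fin (dsz i), g t ⟨i, j⟩ ^ 2
          = ∑ j : Fin (dsz i), F' (x t) (ξ t) ⟨i, j⟩ ^ 2 / blockNorm i (F' (x t) (ξ t)) ^ 2 := by
            refine Finset.sum_congr rfl fun j _ => ?_
            rw [hg t ht ⟨i, j⟩]
            ring
        _ = (∑ j : Fin (dsz i), F' (x t) (ξ t) ⟨i, j⟩ ^ 2) / blockNorm i (F' (x t) (ξ t)) ^ 2 :=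
            (Finset.sum_div _ _ _).symm
        _ = 1 := by rw [← hNsq]; field_simp
    rw [Finset.sum_congr rfl fun i _ => hone i]
    simp
  have hsT : ∀ k : (i : Fin B) × Fin (dsz i),
      s (T - 1) k = Real.sqrt (∑ t ∈ Finset.range T, g t k ^ 2) := by
    intro k
    rw [hs (T - 1) (by omega) k, Nat.sub_add_cancel hT]
  have hssum_sq : ∑ k : (i : Fin B) × Fin (dsz i), s (T - 1) k ^ 2 = (B : ℝ) * T := by
    calc ∑ k : (i : Fin B) × Fin (dsz i), s (T - 1) k ^ 2
        = ∑ k : (i : Fin B) × Fin (dsz i), ∑ t ∈ Finset.range T, g t k ^ 2 := by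
          refine Finset.sum_congr rfl fun k _ => ?_
          rw [hs_sq (T - 1) (by omega) k, Nat.sub_add_cancel hT]
      _ = ∑ t ∈ Finset.range T, ∑ k : (i : Fin B) × Fin (dsz i), g t k ^ 2 := Finset.sum_comm
      _ = ∑ t ∈ Finset.range T, (B : ℝ) :=
          Finset.sum_congr rfl fun t ht => hgsq t (Finset.mem_range.mp ht)
      _ = (B : ℝ) * T := by rw [Finset.sum_const]; simp [mul_comm]
  have hsTnonneg : ∀ k : (i : Fin B) × Fin (dsz i), 0 ≤ s (T - 1) k :=
    fun k => hs_nonneg (T - 1) (by omega) k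
  have hcard : ((Finset.univ : Finset ((i : Fin B) × Fin (dsz i))).card : ℝ)
      = ∑ i : Fin B, (dsz i : ℝ) := by
    simp [Finset.card_univ, Fintype.card_sigma]
  have hCS : ∑ k : (i : Fin B) × Fin (dsz i), s (T - 1) k
      ≤ Real.sqrt ((B : ℝ) * ∑ i : Fin B, (dsz i : ℝ)) * Real.sqrt T := by
    have h1 : (∑ k : (i : Fin B) × Fin (dsz i), s (T - 1) k) ^ 2
        ≤ ((Finset.univ : Finset ((i : Fin B) × Fin (dsz i))).card : ℝ)
            * ∑ k : (i : Fin B) × Fin (dsz i), s (T - 1) k ^ 2 :=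
      sq_sum_le_card_mul_sum_sq
    rw [hssum_sq, hcard] at h1
    have h2 : ∑ k : (i : Fin B) × Fin (dsz i), s (T - 1) k
        = Real.sqrt ((∑ k : (i : Fin B) × Fin (dsz i), s (T - 1) k) ^ 2) :=
      (Real.sqrt_sq (Finset.sum_nonneg fun k _ => hsTnonneg k)).symm
    rw [h2]
    calc Real.sqrt ((∑ k : (i : Fin B) × Fin (dsz i), s (T - 1) k) ^ 2)
        ≤ Real.sqrt ((∑ i : Fin B, (dsz i : ℝ)) * ((B : ℝ) * T)) := Real.sqrt_le_sqrt h1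
      _ = Real.sqrt ((B : ℝ) * ∑ i : Fin B, (dsz i : ℝ)) * Real.sqrt T := by
          rw [show (∑ i : Fin B, (dsz i : ℝ)) * ((B : ℝ) * T)
              = ((B : ℝ) * ∑ i : Fin B, (dsz i : ℝ)) * T by ring,
            Real.sqrt_mul (by positivity)]
  -- main summed bound
  have hmain : ∑ t ∈ Finset.range T, (F (x t) (ξ t) - F xstar (ξ t))
      ≤ (∑ k : (i : Fin B) × Fin (dsz i), (δ + s 0 k) * (x 0 k - xstar k) ^ 2) / (2 * η)
        + Dinf ^ 2 * (∑ k : (i : Fin B) × Fin (dsz i), s (T - 1) k) / (2 * η)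
        + η * ∑ k : (i : Fin B) × Fin (dsz i), M k.1 ^ 2 * s (T - 1) k := by
    calc ∑ t ∈ Finset.range T, (F (x t) (ξ t) - F xstar (ξ t))
        ≤ ∑ t ∈ Finset.range T, ∑ k : (i : Fin B) × Fin (dsz i),
            F' (x t) (ξ t) k * (x t k - xstar k) :=
          Finset.sum_le_sum fun t ht => hreg t (Finset.mem_range.mp ht)
      _ = ∑ t ∈ Finset.range T, ∑ k : (i : Fin B) × Fin (dsz i),
            ((δ + s t k) / (2 * η) * ((x t k - xstar k) ^ 2 - (x (t + 1) k - xstar k) ^ 2)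
              + η / (2 * (δ + s t k)) * (F' (x t) (ξ t) k) ^ 2) := by
          refine Finset.sum_congr rfl fun t ht => Finset.sum_congr rfl fun k _ => ?_
          exact hstep t (Finset.mem_range.mp ht) k
      _ ≤ ∑ t ∈ Finset.range T, ∑ k : (i : Fin B) × Fin (dsz i),
            ((δ + s t k) / (2 * η) * ((x t k - xstar k) ^ 2 - (x (t + 1) k - xstar k) ^ 2)
              + (η * M k.1 ^ 2 / 2) * (g t k ^ 2 / (δ + s t k))) := by
          refine Finset.sum_le_sum fun t ht => Finset.sum_le_sum fun k _ => ?_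
          have h := hterm2 t (Finset.mem_range.mp ht) k
          linarith
      _ = ∑ k : (i : Fin B) × Fin (dsz i),
            ((∑ t ∈ Finset.range T,
                (δ + s t k) * ((x t k - xstar k) ^ 2 - (x (t + 1) k - xstar k) ^ 2)) / (2 * η)
              + (η * M k.1 ^ 2 / 2) * ∑ t ∈ Finset.range T, g t k ^ 2 / (δ + s t k)) := by
          rw [Finset.sum_comm]
          refine Finset.sum_congr rfl fun k _ => ?_
          rw [Finset.sum_add_distrib, Finset.sum_div, Finset.mul_sum]
          congr 1
          refine Finset.sum_congr rfl fun t _ => ?_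
          ring
      _ ≤ ∑ k : (i : Fin B) × Fin (dsz i),
            (((δ + s 0 k) * (x 0 k - xstar k) ^ 2 + Dinf ^ 2 * s (T - 1) k) / (2 * η)
              + (η * M k.1 ^ 2 / 2) * (2 * s (T - 1) k)) := by
          refine Finset.sum_le_sum fun k _ => ?_
          have h1 := habel k
          have h2 := hsum2 k
          have h3 : (∑ t ∈ Finset.range T,
                (δ + s t k) * ((x t k - xstar k) ^ 2 - (x (t + 1) k - xstar k) ^ 2)) / (2 * η)
              ≤ ((δ + s 0 k) * (x 0 k - xstar k) ^ 2 + Dinf ^ 2 * s (T - 1) k) / (2 * η) :=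
            div_le_div_of_nonneg_right h1 (by positivity)
          have h4 := mul_le_mul_of_nonneg_left h2 (by positivity : (0:ℝ) ≤ η * M k.1 ^ 2 / 2)
          linarith
      _ = (∑ k : (i : Fin B) × Fin (dsz i), (δ + s 0 k) * (x 0 k - xstar k) ^ 2) / (2 * η)
          + Dinf ^ 2 * (∑ k : (i : Fin B) × Fin (dsz i), s (T - 1) k) / (2 * η)
          + η * ∑ k : (i : Fin B) × Fin (dsz i), M k.1 ^ 2 * s (T - 1) k := by
          have he : ∀ k : (i : Fin B) × Fin (dsz i),
              ((δ + s 0 k) * (x 0 k - xstar k) ^ 2 + Dinf ^ 2 * s (T - 1) k) / (2 * η)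
                + (η * M k.1 ^ 2 / 2) * (2 * s (T - 1) k)
              = (δ + s 0 k) * (x 0 k - xstar k) ^ 2 / (2 * η)
                + Dinf ^ 2 * s (T - 1) k / (2 * η)
                + η * (M k.1 ^ 2 * s (T - 1) k) := by
            intro k
            field_simp
          rw [Finset.sum_congr rfl fun k _ => he k, Finset.sum_add_distrib,
            Finset.sum_add_distrib, ← Finset.sum_div, ← Finset.sum_div,
            ← Finset.mul_sum, ← Finset.mul_sum]
  -- divide by T and finish
  have hTpos : (0:ℝ) < T := by exact_mod_cast hT
  have hsqTpos : 0 < Real.sqrt T := Real.sqrt_pos.mpr hTpos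
  have hS3eq : ∑ k : (i : Fin B) × Fin (dsz i), M k.1 ^ 2 * s (T - 1) k
      = ∑ i : Fin B, M i ^ 2 *
          ∑ j : Fin (dsz i), Real.sqrt (∑ t ∈ Finset.range T, g t ⟨i, j⟩ ^ 2) := by
    rw [← Finset.univ_sigma_univ, Finset.sum_sigma]
    refine Finset.sum_congr rfl fun i _ => ?_
    rw [Finset.mul_sum]
    exact Finset.sum_congr rfl fun j _ => by rw [hsT ⟨i, j⟩]
  have halmost : (1 / (T : ℝ)) * ∑ t ∈ Finset.range T, (F (x t) (ξ t) - F xstar (ξ t))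
      ≤ (1 / (T : ℝ)) *
        ((∑ k : (i : Fin B) × Fin (dsz i), (δ + s 0 k) * (x 0 k - xstar k) ^ 2) / (2 * η)
          + Dinf ^ 2 * (∑ k : (i : Fin B) × Fin (dsz i), s (T - 1) k) / (2 * η)
          + η * ∑ k : (i : Fin B) × Fin (dsz i), M k.1 ^ 2 * s (T - 1) k) :=
    mul_le_mul_of_nonneg_left hmain (by positivity)
  refine halmost.trans ?_
  rw [hS3eq]
  set S1 := ∑ k : (i : Fin B) × Fin (dsz i), (δ + s 0 k) * (x 0 k - xstar k) ^ 2 with hS1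
  set S2 := ∑ k : (i : Fin B) × Fin (dsz i), s (T - 1) k with hS2
  set u := Real.sqrt ((B : ℝ) * ∑ i : Fin B, (dsz i : ℝ)) with hu
  have hA : (1 / (T : ℝ)) * (S1 / (2 * η)) = S1 / (2 * η * T) := by
    field_simp
  have hkey : Real.sqrt (T : ℝ) * Real.sqrt (T : ℝ) = (T : ℝ) := Real.mul_self_sqrt hTpos.le
  have hmid : (1 / (T : ℝ)) * (Dinf ^ 2 * S2 / (2 * η))
      ≤ Dinf ^ 2 * u / (2 * η * Real.sqrt T) := by
    have h1 : Dinf ^ 2 * S2 ≤ Dinf ^ 2 * (u * Real.sqrt T) :=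
      mul_le_mul_of_nonneg_left hCS (by positivity)
    have h2 : (1 / (T : ℝ)) * (Dinf ^ 2 * S2 / (2 * η)) = Dinf ^ 2 * S2 / (2 * η * T) := by
      field_simp
    have h3 : Dinf ^ 2 * S2 / (2 * η * T) ≤ Dinf ^ 2 * (u * Real.sqrt T) / (2 * η * T) := by
      exact div_le_div_of_nonneg_right h1 (by positivity)
    have h4 : Dinf ^ 2 * (u * Real.sqrt T) / (2 * η * T) = Dinf ^ 2 * u / (2 * η * Real.sqrt T) := by
      rw [div_eq_div_iff (by positivity) (by positivity)]
      linear_combination (2 * η * Dinf ^ 2 * u) * hkey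
    rw [h2]
    rw [← h4] at *
    exact h3.trans_eq h4
  have hC : (1 / (T : ℝ)) *
        (η * ∑ i : Fin B, M i ^ 2 *
          ∑ j : Fin (dsz i), Real.sqrt (∑ t ∈ Finset.range T, g t ⟨i, j⟩ ^ 2))
      = ∑ i : Fin B, (η * M i ^ 2 / T) *
          ∑ j : Fin (dsz i), Real.sqrt (∑ t ∈ Finset.range T, g t ⟨i, j⟩ ^ 2) := by
    rw [Finset.mul_sum, Finset.mul_sum]
    refine Finset.sum_congr rfl fun i _ => ?_
    field_simp
  have hsplit : (1 / (T : ℝ)) *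
        (S1 / (2 * η) + Dinf ^ 2 * S2 / (2 * η)
          + η * ∑ i : Fin B, M i ^ 2 *
              ∑ j : Fin (dsz i), Real.sqrt (∑ t ∈ Finset.range T, g t ⟨i, j⟩ ^ 2))
      = (1 / (T : ℝ)) * (S1 / (2 * η)) + (1 / (T : ℝ)) * (Dinf ^ 2 * S2 / (2 * η))
        + (1 / (T : ℝ)) *
            (η * ∑ i : Fin B, M i ^ 2 *
              ∑ j : Fin (dsz i), Real.sqrt (∑ t ∈ Finset.range T, g t ⟨i, j⟩ ^ 2)) := by
    ring
  rw [hsplit, hA, hC]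
  linarith [hmid]
end

section
/- AdaGrad summation lemma (inequality (3) used in the proof of Theorem 1). Let δ > 0 and let a_1,…,a_T be real numbers. Then ∑_{t=1}^T a_t² / (δ + √(∑_{s=1}^t a_s²)) ≤ 2 √(∑_{t=1}^T a_t²). -/
lemma adagrad_key (δ x b : ℝ) (hδ : 0 < δ) (hx : 0 ≤ x) (hb : 0 ≤ b) :
    b / (δ + Real.sqrt (x + b)) ≤ 2 * (Real.sqrt (x + b) - Real.sqrt x) := by
  rcases eq_or_lt_of_le hb with h | h
  · simp [← h]
  · have hy : 0 < x + b := by linarith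
    have hsy : 0 < Real.sqrt (x + b) := Real.sqrt_pos.mpr hy
    have hsx : 0 ≤ Real.sqrt x := Real.sqrt_nonneg x
    have hmono : Real.sqrt x ≤ Real.sqrt (x + b) := Real.sqrt_le_sqrt (by linarith)
    have hb' : b = (Real.sqrt (x + b) - Real.sqrt x) * (Real.sqrt (x + b) + Real.sqrt x) := by
      have h1 : Real.sqrt (x + b) ^ 2 = x + b := Real.sq_sqrt hy.le
      have h2 : Real.sqrt x ^ 2 = x := Real.sq_sqrt hx
      nlinarith
    have hle : b ≤ (Real.sqrt (x + b) - Real.sqrt x) * (2 * Real.sqrt (x + b)) := by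
      nlinarith
    rw [div_le_iff₀ (by linarith)]
    nlinarith
/-- **AdaGrad summation lemma** (inequality (3) in the proof of Theorem 1 of
"Training Deep Neural Networks via Block-Normalized Gradient").
For `δ > 0` and real numbers `a 0, …, a (T-1)` (representing `a_1, …, a_T`),
`∑_{t=1}^T a_t² / (δ + √(∑_{s=1}^t a_s²)) ≤ 2 √(∑_{t=1}^T a_t²)`. -/
theorem adagrad_summation_lemma (T : ℕ) (δ : ℝ) (hδ : 0 < δ) (a : ℕ → ℝ) :
    ∑ t ∈ Finset.range T,
        a t ^ 2 / (δ + Real.sqrt (∑ s ∈ Finset.range (t + 1), a s ^ 2))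
      ≤ 2 * Real.sqrt (∑ t ∈ Finset.range T, a t ^ 2) := by
  induction T with
  | zero => simp
  | succ n ih =>
    rw [Finset.sum_range_succ, Finset.sum_range_succ (f := fun t => a t ^ 2)]
    have key := adagrad_key δ (∑ s ∈ Finset.range n, a s ^ 2) (a n ^ 2) hδ
      (Finset.sum_nonneg fun i _ => sq_nonneg _) (sq_nonneg _)
    linarith
end
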